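/- Let ρ > 1, let 0 < s < p < q < ∞ and θ ∈ (0, 1) satisfy 1/p = θ/q + (1 − θ)/s, let C > 0, let k ∈ ℤ, and let w_k ≥ 0. If the truncation f_{ρ,k} satisfies ‖f_{ρ,k}‖_p ≤ (C w_k)^θ ‖f_{ρ,k}‖_s^{1−θ}, then a_{f,q,k+1,ρ} ≤ ρ^q (ρ − 1)^{−pθ} (C w_k)^{pθ} · (a_{f,q,k,ρ})^{p(1−θ)/s}. -/

import Mathlib

open MeasureTheory ENNReal

/-- Let `ρ > 1`, `0 < s < p < q < ∞` and `θ ∈ (0, 1)` with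
`1/p = θ/q + (1 − θ)/s`, let `C > 0`, `k ∈ ℤ` and `w_k ≥ 0` (`w_k = W(f_{ρ,k})`).
If the truncation `f_{ρ,k} := min((f − ρ^k)⁺, ρ^k(ρ − 1))` satisfies
`‖f_{ρ,k}‖_p ≤ (C w_k)^θ ‖f_{ρ,k}‖_s^{1−θ}`, then
`a_{f,q,k+1,ρ} ≤ ρ^q (ρ − 1)^{−pθ} (C w_k)^{pθ} (a_{f,q,k,ρ})^{p(1−θ)/s}`,
where `a_{f,q,k,ρ} := ρ^{qk} μ({f ≥ ρ^k})`. -/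
theorem stmt8 {M : Type*} [MeasurableSpace M] (μ : Measure M) [SigmaFinite μ]
    (f : M → ℝ) (hfm : Measurable f) (hf0 : ∀ x, 0 ≤ f x)
    (hfLp : ∀ r : ℝ, 0 < r → Integrable (fun x => f x ^ r) μ)
    (ρ : ℝ) (hρ : 1 < ρ) (s p q θ C : ℝ)
    (hs : 0 < s) (hsp : s < p) (hpq : p < q)
    (hθ0 : 0 < θ) (hθ1 : θ < 1) (hrel : 1 / p = θ / q + (1 - θ) / s)
    (hC : 0 < C) (k : ℤ) (wk : ℝ) (hwk : 0 ≤ wk)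
    (hSob : (∫ x, (min (max (f x - ρ ^ k) 0) (ρ ^ k * (ρ - 1))) ^ p ∂μ) ^ (1 / p) ≤
      (C * wk) ^ θ *
        ((∫ x, (min (max (f x - ρ ^ k) 0) (ρ ^ k * (ρ - 1))) ^ s ∂μ) ^ (1 / s)) ^ (1 - θ)) :
    ENNReal.ofReal ((ρ ^ (k + 1) : ℝ) ^ q) * μ {x | ρ ^ (k + 1) ≤ f x} ≤
      ENNReal.ofReal (ρ ^ q * (ρ - 1) ^ (-(p * θ)) * (C * wk) ^ (p * θ)) *
        (ENNReal.ofReal ((ρ ^ k : ℝ) ^ q) * μ {x | ρ ^ k ≤ f x}) ^ (p * (1 - θ) / s) := by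
  have hρ0 : (0:ℝ) < ρ := by linarith
  have hρ1 : (0:ℝ) < ρ - 1 := by linarith
  have hp : 0 < p := lt_trans hs hsp
  have hq : 0 < q := lt_trans hp hpq
  set A : ℝ := ρ ^ k with hAdef
  have hA : 0 < A := zpow_pos hρ0 k
  set B : ℝ := A * (ρ - 1) with hBdef
  have hB : 0 < B := mul_pos hA hρ1
  set g : M → ℝ := fun x => min (max (f x - A) 0) (A * (ρ - 1)) with hgdef
  have hg0 : ∀ x, 0 ≤ g x := fun x => le_min (le_max_right _ _) hB.le
  have hgB : ∀ x, g x ≤ B := fun x => min_le_right _ _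
  have hgf : ∀ x, g x ≤ f x := fun x =>
    (min_le_left _ _).trans (max_le (by linarith [hf0 x]) (hf0 x))
  have hgmeas : Measurable g := ((hfm.sub measurable_const).max measurable_const).min
    measurable_const
  set e : ℝ := p * (1 - θ) / s with hedef
  have he : 0 < e := div_pos (mul_pos hp (by linarith)) hs
  have hse : s * e = p * (1 - θ) := by rw [hedef]; field_simp [hs.ne']
  have hqe : q * e = q - p * θ := by
    have hp' : p ≠ 0 := hp.ne'
    have hq' : q ≠ 0 := hq.ne'
    have hs' : s ≠ 0 := hs.ne'
    field_simp [hedef] at hrel ⊢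
    nlinarith [hrel]
  set S : Set M := {x | ρ ^ (k+1) ≤ f x} with hSdef
  set T : Set M := {x | A ≤ f x} with hTdef
  have hSm : MeasurableSet S := measurableSet_le measurable_const hfm
  have hTm : MeasurableSet T := measurableSet_le measurable_const hfm
  have hf1 : Integrable f μ := by
    have := hfLp 1 one_pos
    simpa using this
  have hμS : μ S < ⊤ := by
    have := hf1.measure_ge_lt_top (show (0:ℝ) < ρ ^ (k+1) from zpow_pos hρ0 _)
    simpa [hSdef] using this
  have hμT : μ T < ⊤ := by
    have := hf1.measure_ge_lt_top hA
    simpa [hTdef] using this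
  set r0 : ℝ := (μ T).toReal with hr0def
  set r1 : ℝ := (μ S).toReal with hr1def
  have hr0 : 0 ≤ r0 := ENNReal.toReal_nonneg
  have hr1 : 0 ≤ r1 := ENNReal.toReal_nonneg
  set Ip : ℝ := ∫ x, g x ^ p ∂μ with hIpdef
  set Is : ℝ := ∫ x, g x ^ s ∂μ with hIsdef
  have hIp0 : 0 ≤ Ip := integral_nonneg fun x => Real.rpow_nonneg (hg0 x) p
  have hIs0 : 0 ≤ Is := integral_nonneg fun x => Real.rpow_nonneg (hg0 x) s
  have hgint : ∀ r : ℝ, 0 < r → Integrable (fun x => g x ^ r) μ := by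
    intro r hr
    refine (hfLp r hr).mono (((Real.continuous_rpow_const hr.le).measurable.comp hgmeas).aestronglyMeasurable) ?_
    filter_upwards with x
    rw [Real.norm_eq_abs, Real.norm_eq_abs, abs_of_nonneg (Real.rpow_nonneg (hg0 x) r),
      abs_of_nonneg (Real.rpow_nonneg (hf0 x) r)]
    exact Real.rpow_le_rpow (hg0 x) (hgf x) hr.le
  -- Step A : B^p * r1 ≤ Ip
  have hgS : ∀ x ∈ S, g x = B := by
    intro x hx
    have hx' : ρ ^ (k+1) ≤ f x := hx
    have : A * ρ ≤ f x := by
      rwa [hAdef, ← zpow_add_one₀ hρ0.ne'] 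
    have hB' : B ≤ max (f x - A) 0 := le_max_of_le_left (by nlinarith)
    simpa [hgdef, hBdef] using min_eq_right hB'
  have stepA : B ^ p * r1 ≤ Ip := by
    have h1 : ∫ x in S, g x ^ p ∂μ = B ^ p * r1 := by
      rw [setIntegral_congr_fun hSm (g := fun _ => B ^ p) (fun x hx => by rw [hgS x hx]),
        setIntegral_const, smul_eq_mul, mul_comm]; rfl
    calc B ^ p * r1 = ∫ x in S, g x ^ p ∂μ := h1.symm
      _ ≤ Ip := setIntegral_le_integral (hgint p hp)
          (Filter.Eventually.of_forall fun x => Real.rpow_nonneg (hg0 x) p)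
  -- Step B : Is ≤ B^s * r0
  have stepB : Is ≤ B ^ s * r0 := by
    have hind : Integrable (T.indicator fun _ => B ^ s) μ := by
      rw [integrable_indicator_iff hTm]
      exact integrableOn_const hμT.ne
    have hmono : ∀ x, g x ^ s ≤ T.indicator (fun _ => B ^ s) x := by
      intro x
      by_cases hx : x ∈ T
      · rw [Set.indicator_of_mem hx]
        exact Real.rpow_le_rpow (hg0 x) (hgB x) hs.le
      · rw [Set.indicator_of_notMem hx]
        have hfx : f x < A := lt_of_not_ge hx
        have : g x = 0 := by
          have : max (f x - A) 0 = 0 := max_eq_right (by linarith)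
          simp [hgdef, this, (mul_pos hA hρ1).le]
        rw [this, Real.zero_rpow hs.ne']
    calc Is ≤ ∫ x, T.indicator (fun _ => B ^ s) x ∂μ :=
          integral_mono (hgint s hs) hind hmono
      _ = B ^ s * r0 := by
          rw [integral_indicator_const _ hTm, smul_eq_mul, mul_comm]; rfl
  -- Step C : Ip ≤ (C*wk)^(p*θ) * Is^e
  have stepC : Ip ≤ (C * wk) ^ (p * θ) * Is ^ e := by
    have hCw : 0 ≤ C * wk := mul_nonneg hC.le hwk
    have h := Real.rpow_le_rpow (Real.rpow_nonneg hIp0 _) hSob hp.le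
    rw [one_div, Real.rpow_inv_rpow hIp0 hp.ne'] at h
    calc Ip ≤ ((C * wk) ^ θ * (Is ^ (1/s)) ^ (1 - θ)) ^ p := h
      _ = (C * wk) ^ (p * θ) * Is ^ e := by
          rw [Real.mul_rpow (Real.rpow_nonneg hCw _)
              (Real.rpow_nonneg (Real.rpow_nonneg hIs0 _) _),
            ← Real.rpow_mul hCw, ← Real.rpow_mul (Real.rpow_nonneg hIs0 _),
            ← Real.rpow_mul hIs0, mul_comm θ p,
            show 1 / s * ((1 - θ) * p) = e by rw [hedef]; ring]
  -- combine: r1 ≤ B^(-p) * ((C*wk)^(p*θ) * (B^s * r0)^e)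
  set X : ℝ := (C * wk) ^ (p * θ) with hXdef
  have hX0 : 0 ≤ X := Real.rpow_nonneg (mul_nonneg hC.le hwk) _
  have hcomb : B ^ p * r1 ≤ X * (B ^ s * r0) ^ e :=
    stepA.trans (stepC.trans (mul_le_mul_of_nonneg_left
      (Real.rpow_le_rpow hIs0 stepB he.le) hX0))
  have hr1le : r1 ≤ B ^ (-p) * (X * (B ^ s * r0) ^ e) := by
    have hBp : 0 < B ^ p := Real.rpow_pos_of_pos hB p
    rw [Real.rpow_neg hB.le, ← div_eq_inv_mul, le_div_iff₀ hBp]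
    linarith [hcomb]
  -- key algebraic identity
  have key : (A * ρ) ^ q * (B ^ (-p) * (X * (B ^ s * r0) ^ e)) =
      ρ ^ q * (ρ - 1) ^ (-(p * θ)) * X * (A ^ q * r0) ^ e := by
    have hBt : ∀ t : ℝ, B ^ t = A ^ t * (ρ - 1) ^ t := fun t => by
      rw [hBdef, Real.mul_rpow hA.le hρ1.le]
    rw [Real.mul_rpow hA.le hρ0.le,
      Real.mul_rpow (Real.rpow_nonneg hA.le q) hr0,
      Real.mul_rpow (Real.rpow_nonneg hB.le s) hr0,
      ← Real.rpow_mul hB.le, ← Real.rpow_mul hA.le, hqe, hse,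
      hBt (-p), hBt (p * (1 - θ)),
      show q - p * θ = q + -p + p * (1 - θ) by ring,
      Real.rpow_add hA, Real.rpow_add hA,
      show -(p * θ) = -p + p * (1 - θ) by ring,
      Real.rpow_add hρ1]
    ring
  have hreal : (A * ρ) ^ q * r1 ≤
      ρ ^ q * (ρ - 1) ^ (-(p * θ)) * X * (A ^ q * r0) ^ e := by
    rw [← key]
    exact mul_le_mul_of_nonneg_left hr1le (Real.rpow_nonneg (by positivity) q)
  -- translate to ENNReal
  have hμS' : μ S = ENNReal.ofReal r1 := (ENNReal.ofReal_toReal hμS.ne).symm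
  have hμT' : μ T = ENNReal.ofReal r0 := (ENNReal.ofReal_toReal hμT.ne).symm
  have hAρ : (ρ : ℝ) ^ (k + 1) = A * ρ := by
    rw [hAdef, ← zpow_add_one₀ hρ0.ne']
  calc ENNReal.ofReal ((ρ ^ (k + 1) : ℝ) ^ q) * μ S
      = ENNReal.ofReal ((A * ρ) ^ q * r1) := by
        rw [hμS', hAρ, ← ENNReal.ofReal_mul (Real.rpow_nonneg (by positivity) q)]
    _ ≤ ENNReal.ofReal (ρ ^ q * (ρ - 1) ^ (-(p * θ)) * X * (A ^ q * r0) ^ e) :=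
        ENNReal.ofReal_le_ofReal hreal
    _ = ENNReal.ofReal (ρ ^ q * (ρ - 1) ^ (-(p * θ)) * X) *
        (ENNReal.ofReal ((ρ ^ k : ℝ) ^ q) * μ T) ^ e := by
        rw [hμT', ← ENNReal.ofReal_mul (Real.rpow_nonneg hA.le q),
          ENNReal.ofReal_rpow_of_nonneg (mul_nonneg (Real.rpow_nonneg hA.le q) hr0) he.le,
          ← ENNReal.ofReal_mul (by positivity)]
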